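/- Let G be an additive abelian group, Q a finitely generated saturated submonoid of G, r a natural number, and φ : (Fin r → ℕ) →+ G an additive monoid homomorphism of Kummer type into Q. Then ℤ[Q] is a free module over ℤ[Fin r → ℕ] via the induced ring homomorphism; moreover the subgroup of G generated by the image of φ has finite index in the subgroup of G generated by Q, and the rank of this free module equals that index. -/

import Mathlib

/-- A submonoid `Q` of an additive abelian group `G` is *saturated* if every element `g` of the
subgroup of `G` generated by `Q` such that `n • g ∈ Q` for some integer `n ≥ 1` lies in `Q`. -/
def IsSaturated {G : Type*} [AddCommGroup G] (Q : AddSubmonoid G) : Prop :=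
  ∀ g ∈ AddSubgroup.closure (Q : Set G), (∃ n : ℤ, 1 ≤ n ∧ n • g ∈ Q) → g ∈ Q

/-- An additive monoid homomorphism `φ : (Fin r → ℕ) →+ G` is *of Kummer type into `Q`* if it is
injective, its image is contained in `Q`, and every `q ∈ Q` has a positive integer multiple in the
image of `φ`. -/
def IsKummerType {G : Type*} [AddCommGroup G] {r : ℕ} (φ : (Fin r → ℕ) →+ G)
    (Q : AddSubmonoid G) : Prop :=
  Function.Injective φ ∧ (∀ x, φ x ∈ Q) ∧
    ∀ q ∈ Q, ∃ n : ℤ, 1 ≤ n ∧ n • q ∈ Set.range φ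

section AuxiliaryLemmasForKummer
variable {G : Type*} [AddCommGroup G] {r : ℕ} {Q : AddSubmonoid G} {φ : (Fin r → ℕ) →+ G}

lemma mem_Pgp_iff (φ : (Fin r → ℕ) →+ G) {g : G} :
    g ∈ AddSubgroup.closure (Set.range φ) ↔ ∃ x y, g = φ x - φ y := by
  constructor
  · intro hg
    induction hg using AddSubgroup.closure_induction with
    | mem a ha => obtain ⟨x, rfl⟩ := ha; exact ⟨x, 0, by simp⟩
    | zero => exact ⟨0, 0, by simp⟩
    | add a b _ _ iha ihb =>
        obtain ⟨x, y, rfl⟩ := iha; obtain ⟨u, v, rfl⟩ := ihb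
        exact ⟨x + u, y + v, by simp [map_add]; abel⟩
    | neg a _ iha =>
        obtain ⟨x, y, rfl⟩ := iha; exact ⟨y, x, by abel⟩
  · rintro ⟨x, y, rfl⟩
    exact sub_mem (AddSubgroup.subset_closure ⟨x, rfl⟩) (AddSubgroup.subset_closure ⟨y, rfl⟩)

lemma mem_Qgp_iff (Q : AddSubmonoid G) {g : G} :
    g ∈ AddSubgroup.closure (Q : Set G) ↔ ∃ a ∈ Q, ∃ b ∈ Q, g = a - b := by
  constructor
  · intro hg
    induction hg using AddSubgroup.closure_induction with
    | mem a ha => exact ⟨a, ha, 0, zero_mem Q, by simp⟩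
    | zero => exact ⟨0, zero_mem Q, 0, zero_mem Q, by simp⟩
    | add a b _ _ iha ihb =>
        obtain ⟨x, hx, y, hy, rfl⟩ := iha; obtain ⟨u, hu, v, hv, rfl⟩ := ihb
        exact ⟨x + u, add_mem hx hu, y + v, add_mem hy hv, by abel⟩
    | neg a _ iha =>
        obtain ⟨x, hx, y, hy, rfl⟩ := iha; exact ⟨y, hy, x, hx, by abel⟩
  · rintro ⟨a, ha, b, hb, rfl⟩
    exact sub_mem (AddSubgroup.subset_closure ha) (AddSubgroup.subset_closure hb)

lemma kummer_nat (hkum : ∀ q ∈ Q, ∃ n : ℤ, 1 ≤ n ∧ n • q ∈ Set.range φ) {q : G} (hq : q ∈ Q) :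
    ∃ n : ℕ, 0 < n ∧ ∃ u, n • q = φ u := by
  obtain ⟨n, hn1, u, hu⟩ := hkum q hq
  refine ⟨n.toNat, by omega, u, ?_⟩
  rw [← natCast_zsmul, Int.toNat_of_nonneg (by omega)] at *
  exact hu.symm

lemma sat_nat (hQsat : ∀ g ∈ AddSubgroup.closure (Q : Set G),
      (∃ n : ℤ, 1 ≤ n ∧ n • g ∈ Q) → g ∈ Q)
    (hsub : ∀ x, φ x ∈ Q) {g : G} (hg : g ∈ AddSubgroup.closure (Q : Set G))
    (h : ∃ n : ℕ, 0 < n ∧ ∃ u, n • g = φ u) : g ∈ Q := by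
  obtain ⟨n, hn, u, hu⟩ := h
  exact hQsat g hg ⟨n, by exact_mod_cast hn, by rw [natCast_zsmul, hu]; exact hsub u⟩

lemma Pgp_le_Qgp (hsub : ∀ x, φ x ∈ Q) :
    AddSubgroup.closure (Set.range φ) ≤ AddSubgroup.closure (Q : Set G) :=
  AddSubgroup.closure_mono (by rintro _ ⟨x, rfl⟩; exact hsub x)

lemma torsion_mod_Pgp (hkum : ∀ q ∈ Q, ∃ n : ℤ, 1 ≤ n ∧ n • q ∈ Set.range φ)
    {g : G} (hg : g ∈ AddSubgroup.closure (Q : Set G)) :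
    ∃ n : ℕ, 0 < n ∧ n • g ∈ AddSubgroup.closure (Set.range φ) := by
  obtain ⟨a, ha, b, hb, rfl⟩ := (mem_Qgp_iff Q).1 hg
  obtain ⟨n, hn, u, hu⟩ := kummer_nat hkum ha
  obtain ⟨m, hm, v, hv⟩ := kummer_nat hkum hb
  refine ⟨n * m, by positivity, ?_⟩
  rw [mem_Pgp_iff φ]
  refine ⟨m • u, n • v, ?_⟩
  rw [smul_sub, map_nsmul, map_nsmul, ← hu, ← hv, smul_smul, smul_smul, mul_comm m n]

lemma coset_meets (hkum : ∀ q ∈ Q, ∃ n : ℤ, 1 ≤ n ∧ n • q ∈ Set.range φ)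
    {g : G} (hg : g ∈ AddSubgroup.closure (Q : Set G)) :
    ∃ q ∈ Q, g - q ∈ AddSubgroup.closure (Set.range φ) := by
  obtain ⟨a, ha, b, hb, rfl⟩ := (mem_Qgp_iff Q).1 hg
  obtain ⟨n, hn, u, hu⟩ := kummer_nat hkum hb
  refine ⟨a + (n - 1) • b, add_mem ha (nsmul_mem hb _), ?_⟩
  have : a - b - (a + (n - 1) • b) = -(n • b) := by
    have : (n - 1) • b + b = n • b := by
      rw [← succ_nsmul]; congr 1; omega
    rw [← this]; abel
  rw [this, hu]
  exact neg_mem (AddSubgroup.subset_closure ⟨u, rfl⟩)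

lemma common_lower (hQsat : ∀ g ∈ AddSubgroup.closure (Q : Set G),
      (∃ n : ℤ, 1 ≤ n ∧ n • g ∈ Q) → g ∈ Q)
    (hinj : Function.Injective φ) (hsub : ∀ x, φ x ∈ Q)
    (hkum : ∀ q ∈ Q, ∃ n : ℤ, 1 ≤ n ∧ n • q ∈ Set.range φ)
    {p p' : G} (hp : p ∈ Q) (hp' : p' ∈ Q)
    (h : p - p' ∈ AddSubgroup.closure (Set.range φ)) :
    ∃ h ∈ Q, ∃ x y, p = h + φ x ∧ p' = h + φ y := by
  obtain ⟨x0, y0, hxy⟩ := (mem_Pgp_iff φ).1 h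
  set x : Fin r → ℕ := fun i => x0 i - min (x0 i) (y0 i) with hxdef
  set y : Fin r → ℕ := fun i => y0 i - min (x0 i) (y0 i) with hydef
  obtain ⟨d, hd0⟩ : ∃ d : Fin r → ℕ, d = fun i => min (x0 i) (y0 i) := ⟨_, rfl⟩
  have hx0 : x0 = x + d := by
    funext i; simp [hxdef, hd0, Nat.sub_add_cancel (Nat.min_le_left _ _)]
  have hy0 : y0 = y + d := by
    funext i; simp [hydef, hd0, Nat.sub_add_cancel (Nat.min_le_right _ _)]
  have hdisj : ∀ i, x i = 0 ∨ y i = 0 := by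
    intro i
    rcases le_total (x0 i) (y0 i) with h' | h'
    · left; simp [hxdef, min_eq_left h', Nat.sub_eq_zero_of_le le_rfl]
    · right; simp [hydef, min_eq_right h', Nat.sub_eq_zero_of_le le_rfl]
  have hd : φ x0 - φ y0 = φ x - φ y := by
    conv_lhs => rw [hx0, hy0]
    rw [map_add, map_add]; abel
  have key : p - φ x = p' - φ y :=
    sub_eq_sub_iff_sub_eq_sub.mp (by rw [hxy, hd])
  -- h := p - φ x is the common lower bound
  obtain ⟨n, hn, u, hu⟩ := kummer_nat hkum hp
  obtain ⟨m, hm, v, hv⟩ := kummer_nat hkum hp'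
  have hmem : p - φ x ∈ AddSubgroup.closure (Q : Set G) := by
    refine sub_mem (AddSubgroup.subset_closure hp) (Pgp_le_Qgp hsub ?_)
    exact AddSubgroup.subset_closure ⟨x, rfl⟩
  have hup : φ (m • u) = (n * m) • p := by rw [map_nsmul, ← hu, smul_smul, mul_comm]
  have hvp : φ (n • v) = (n * m) • p' := by rw [map_nsmul, ← hv, smul_smul]
  have heq1 : (n * m) • (p - φ x) = φ (m • u) - φ ((n * m) • x) := by
    rw [hup, map_nsmul, smul_sub]
  have heq2 : (n * m) • (p - φ x) = φ (n • v) - φ ((n * m) • y) := by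
    rw [key, hvp, map_nsmul, smul_sub]
  have hnat : m • u + (n * m) • y = n • v + (n * m) • x := by
    apply hinj
    rw [map_add, map_add]
    have := heq1.symm.trans heq2
    rw [sub_eq_sub_iff_add_eq_add] at this
    linear_combination (norm := abel) this
  have hle : ∀ i, (n * m) * x i ≤ m * u i := by
    intro i
    have hi := congrFun hnat i
    simp only [Pi.add_apply, Pi.smul_apply, smul_eq_mul] at hi
    rcases hdisj i with h0 | h0
    · simp [h0]
    · rw [h0, mul_zero, add_zero] at hi; omega
  set w : Fin r → ℕ := fun i => m * u i - (n * m) * x i with hwdef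
  have hw : m • u = w + (n * m) • x := by
    funext i
    have := hle i
    simp only [hwdef, Pi.add_apply, Pi.smul_apply, smul_eq_mul]
    omega
  have hmul : (n * m) • (p - φ x) = φ w := by
    rw [heq1, hw, map_add]; abel
  have hQ : p - φ x ∈ Q := sat_nat hQsat hsub hmem ⟨n * m, by positivity, w, hmul⟩
  exact ⟨p - φ x, hQ, x, y, by abel, by rw [key]; abel⟩

lemma exists_min (hQsat : ∀ g ∈ AddSubgroup.closure (Q : Set G),
      (∃ n : ℤ, 1 ≤ n ∧ n • g ∈ Q) → g ∈ Q)
    (hinj : Function.Injective φ) (hsub : ∀ x, φ x ∈ Q)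
    (hkum : ∀ q ∈ Q, ∃ n : ℤ, 1 ≤ n ∧ n • q ∈ Set.range φ)
    {q₀ : G} (hq₀ : q₀ ∈ Q) :
    ∃ m ∈ Q, q₀ - m ∈ AddSubgroup.closure (Set.range φ) ∧
      ∀ p ∈ Q, p - q₀ ∈ AddSubgroup.closure (Set.range φ) → ∃ a, p = m + φ a := by
  classical
  obtain ⟨n₀, hn₀, u₀, hu₀⟩ := kummer_nat hkum hq₀
  set A : Set (Fin r → ℕ) := {a | q₀ - φ a ∈ Q} with hA
  have hbound : ∀ a ∈ A, a ≤ u₀ := by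
    intro a ha
    obtain ⟨m, hm, v, hv⟩ := kummer_nat hkum ha
    have e1 : φ (m • u₀) = (m * n₀) • q₀ := by
      rw [map_nsmul, ← hu₀, smul_smul]
    have e2 : φ (n₀ • v) = (m * n₀) • q₀ - (m * n₀) • φ a := by
      rw [map_nsmul, ← hv, smul_smul, mul_comm n₀ m, ← smul_sub]
    have e3 : m • u₀ = n₀ • v + (m * n₀) • a := by
      apply hinj
      rw [map_add, e1, e2, map_nsmul]
      abel
    intro i
    have hi := congrFun e3 i
    simp only [Pi.add_apply, Pi.smul_apply, smul_eq_mul] at hi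
    have h1 : a i ≤ n₀ * a i := Nat.le_mul_of_pos_left _ hn₀
    have h2 : m * a i ≤ m * (n₀ * a i) := Nat.mul_le_mul_left m h1
    have h3 : m * (n₀ * a i) = m * n₀ * a i := (mul_assoc _ _ _).symm
    have h4 : m * a i ≤ m * u₀ i := by omega
    exact Nat.le_of_mul_le_mul_left h4 hm
  have hAfin : A.Finite :=
    Set.Finite.subset (Set.finite_Icc 0 u₀) fun a ha => Set.mem_Icc.mpr ⟨fun i => Nat.zero_le _, hbound a ha⟩
  have h0A : (0 : Fin r → ℕ) ∈ A := by simp [hA, hq₀]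
  have hdir : ∀ a ∈ A, ∀ b ∈ A, ∃ c ∈ A, a ≤ c ∧ b ≤ c := by
    intro a ha b hb
    have hmem : (q₀ - φ a) - (q₀ - φ b) ∈ AddSubgroup.closure (Set.range φ) := by
      rw [mem_Pgp_iff φ]
      exact ⟨b, a, by abel⟩
    obtain ⟨h, hQ, x, y, hx, hy⟩ := common_lower hQsat hinj hsub hkum ha hb hmem
    have hcA : q₀ = h + φ (a + x) := by
      rw [map_add]
      have : q₀ = (q₀ - φ a) + φ a := by abel
      rw [this, hx]; abel
    have hcB : q₀ = h + φ (b + y) := by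
      rw [map_add]
      have : q₀ = (q₀ - φ b) + φ b := by abel
      rw [this, hy]; abel
    have hab : a + x = b + y := hinj (by
      have := hcA.symm.trans hcB
      exact add_left_cancel this)
    refine ⟨a + x, ?_, le_self_add, hab ▸ le_self_add⟩
    show q₀ - φ (a + x) ∈ Q
    rw [hcA]; simpa using hQ
  obtain ⟨astar, hastar, hmax⟩ := Set.Finite.exists_maximalFor id A hAfin ⟨0, h0A⟩
  have hmaxall : ∀ a ∈ A, a ≤ astar := by
    intro a ha
    obtain ⟨c, hc, hac, hbc⟩ := hdir a ha astar hastar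
    have : astar = c := le_antisymm hbc (hmax hc hbc)
    exact this ▸ hac
  refine ⟨q₀ - φ astar, hastar, ?_, ?_⟩
  · have : q₀ - (q₀ - φ astar) = φ astar := by abel
    rw [this]
    exact AddSubgroup.subset_closure ⟨astar, rfl⟩
  · intro p hp hpq
    obtain ⟨h, hQ, x, y, hx, hy⟩ := common_lower hQsat hinj hsub hkum hp hq₀ hpq
    have hyA : y ∈ A := by
      show q₀ - φ y ∈ Q
      rw [hy]; simpa using hQ
    have hyle := hmaxall y hyA
    obtain ⟨z, hz⟩ : ∃ z, astar = y + z :=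
      ⟨fun i => astar i - y i, funext fun i => by
        have h' : y i ≤ astar i := hyle i
        simp only [Pi.add_apply]
        omega⟩
    refine ⟨z + x, ?_⟩
    have hh : h = (q₀ - φ astar) + φ z := by
      rw [hz, map_add, hy]; abel
    rw [hx, hh, map_add]; abel

lemma aux_prod_single {α β : Type*} (c : α) (a : β) (k : ℤ) :
    Finsupp.finsuppProdLEquiv ℤ (Finsupp.single (c, a) k) = Finsupp.single c (Finsupp.single a k) := by
  classical
  apply Finsupp.ext; intro x
  apply Finsupp.ext; intro y
  show ((Finsupp.single (c, a) k).curry x) y = _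
  rcases eq_or_ne c x with rfl | hcx
  · rcases eq_or_ne a y with rfl | hay
    · simp
    · simp [Finsupp.single_apply, hay]
  · simp [Finsupp.single_apply, hcx, Prod.ext_iff]

end AuxiliaryLemmasForKummer

/-- Refinement of Lemma 2.6: `ℤ[Q]` is a free `ℤ[ℕ^r]`-module, the subgroup generated by the
image of `φ` has finite index in the subgroup generated by `Q`, and the rank of the free module
is this index `|Q^gp / P^gp|`. -/

theorem free_rank_eq_index_of_kummerType
    {G : Type*} [AddCommGroup G] (Q : AddSubmonoid G) (hQfg : Q.FG) (hQsat : IsSaturated Q)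
    {r : ℕ} (φ : (Fin r → ℕ) →+ G) (hφ : IsKummerType φ Q) :
    let ψ : (Fin r → ℕ) →+ Q := (φ.codRestrict Q hφ.2.1)
    let f : AddMonoidAlgebra ℤ (Fin r → ℕ) →+* AddMonoidAlgebra ℤ Q :=
      AddMonoidAlgebra.mapDomainRingHom ℤ ψ
    letI := f.toAlgebra
    let Pgp : AddSubgroup G := AddSubgroup.closure (Set.range φ)
    let Qgp : AddSubgroup G := AddSubgroup.closure (Q : Set G)
    Module.Free (AddMonoidAlgebra ℤ (Fin r → ℕ)) (AddMonoidAlgebra ℤ Q) ∧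
      (Pgp.addSubgroupOf Qgp).index ≠ 0 ∧
      Module.rank (AddMonoidAlgebra ℤ (Fin r → ℕ)) (AddMonoidAlgebra ℤ Q) =
        (Pgp.addSubgroupOf Qgp).index := by
  obtain ⟨hinj, hsub, hkum⟩ := hφ
  intro ψ f
  letI := f.toAlgebra
  intro Pgp Qgp
  have hQle : ∀ {g : G}, g ∈ Q → g ∈ Qgp := fun h => AddSubgroup.subset_closure h
  -- comparison of quotient classes
  have hmk : ∀ (p q : G) (hp : p ∈ Qgp) (hq : q ∈ Qgp),
      ((QuotientAddGroup.mk ⟨p, hp⟩ : ↥Qgp ⧸ Pgp.addSubgroupOf Qgp) =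
        QuotientAddGroup.mk ⟨q, hq⟩) ↔ q - p ∈ Pgp := by
    intro p q hp hq
    rw [QuotientAddGroup.eq, AddSubgroup.mem_addSubgroupOf]
    show -p + q ∈ Pgp ↔ _
    rw [neg_add_eq_sub]
  have hrep : ∀ c : ↥Qgp ⧸ Pgp.addSubgroupOf Qgp, ∃ q : G, ∃ hq : q ∈ Q,
      ((QuotientAddGroup.mk ⟨q, hQle hq⟩ : ↥Qgp ⧸ Pgp.addSubgroupOf Qgp) = c) ∧
      ∀ p ∈ Q, p - q ∈ Pgp → ∃ a, p = q + φ a := by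
    intro c
    induction c using QuotientAddGroup.induction_on with
    | H g =>
      obtain ⟨q, hq, hgq⟩ := coset_meets hkum g.2
      obtain ⟨m, hm, hqm, hmin⟩ := exists_min hQsat hinj hsub hkum hq
      refine ⟨m, hm, ?_, ?_⟩
      · rw [hmk]
        · have : (g : G) - m = ((g : G) - q) + (q - m) := by abel
          rw [this]
          exact add_mem hgq hqm
      · intro p hp hpm
        refine hmin p hp ?_
        have : p - q = (p - m) - (q - m) := by abel
        rw [this]
        exact sub_mem hpm hqm
  choose rep hrepQ hrepmk hrepmin using hrep
  -- the bijection
  set e : (↥Qgp ⧸ Pgp.addSubgroupOf Qgp) × (Fin r → ℕ) → ↥Q :=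
    fun ca => ⟨rep ca.1 + φ ca.2, add_mem (hrepQ _) (hsub _)⟩ with hedef
  have hclass : ∀ ca, (QuotientAddGroup.mk ⟨(e ca : G), hQle (e ca).2⟩ :
      ↥Qgp ⧸ Pgp.addSubgroupOf Qgp) = ca.1 := by
    intro ca
    rw [← hrepmk ca.1, hmk]
    show rep ca.1 - (rep ca.1 + φ ca.2) ∈ Pgp
    have : rep ca.1 - (rep ca.1 + φ ca.2) = -(φ ca.2) := by abel
    rw [this]
    exact neg_mem (AddSubgroup.subset_closure ⟨ca.2, rfl⟩)
  have hbij : Function.Bijective e := by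
    constructor
    · rintro ⟨c, a⟩ ⟨c', a'⟩ h
      have hval : rep c + φ a = rep c' + φ a' := congrArg Subtype.val h
      have hc : c = c' := by
        have h1 := hclass (c, a)
        have h2 := hclass (c', a')
        dsimp only at h1 h2
        rw [← h1, ← h2]
        congr 1
        exact Subtype.ext hval
      rw [hc] at hval
      exact Prod.ext hc (hinj (add_left_cancel hval))
    · intro q
      obtain ⟨a, ha⟩ := hrepmin (QuotientAddGroup.mk ⟨(q : G), hQle q.2⟩) q.1 q.2
        ((hmk _ _ _ _).mp (hrepmk _))
      exact ⟨(QuotientAddGroup.mk ⟨(q : G), hQle q.2⟩, a), (Subtype.ext ha).symm⟩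
  set E := Equiv.ofBijective e hbij with hEdef
  have hEsymm : ∀ (b : Fin r → ℕ) (q : ↥Q),
      E.symm (ψ b + q) = ((E.symm q).1, b + (E.symm q).2) := by
    intro b q
    have h1 : E ((E.symm q).1, b + (E.symm q).2) = ψ b + q := by
      apply Subtype.ext
      show rep _ + φ (b + (E.symm q).2) = φ b + (q : G)
      have h2 : (q : G) = rep (E.symm q).1 + φ (E.symm q).2 :=
        congrArg Subtype.val (E.apply_symm_apply q).symm
      rw [map_add, h2]
      abel
    rw [← h1, Equiv.symm_apply_apply]
  -- the module part
  have hsmul : ∀ (s : AddMonoidAlgebra ℤ (Fin r → ℕ)) (m : AddMonoidAlgebra ℤ ↥Q),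
      s • m = f s * m := by
    intro s m
    rw [Algebra.smul_def, RingHom.algebraMap_toAlgebra]
  let T : Type _ := ↥Qgp ⧸ Pgp.addSubgroupOf Qgp
  let L1 : AddMonoidAlgebra ℤ ↥Q ≃+ ((T × (Fin r → ℕ)) →₀ ℤ) :=
    AddMonoidAlgebra.coeffAddEquiv.trans (Finsupp.domCongr E.symm)
  let L2 : ((T × (Fin r → ℕ)) →₀ ℤ) ≃+ (T →₀ AddMonoidAlgebra ℤ (Fin r → ℕ)) :=
    (Finsupp.finsuppProdLEquiv (α := T) (β := Fin r → ℕ) (M := ℤ) ℤ).toAddEquiv.trans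
      (Finsupp.mapRange.addEquiv AddMonoidAlgebra.coeffAddEquiv.symm)
  let L0 : AddMonoidAlgebra ℤ ↥Q ≃+ (T →₀ AddMonoidAlgebra ℤ (Fin r → ℕ)) := L1.trans L2
  have hL2single : ∀ (c : T) (a : Fin r → ℕ) (k : ℤ),
      L2 (Finsupp.single (c, a) k) = Finsupp.single c (AddMonoidAlgebra.single a k) :=
    fun c a k => by
      change Finsupp.mapRange AddMonoidAlgebra.coeffAddEquiv.symm (map_zero _)
        (Finsupp.finsuppProdLEquiv ℤ (Finsupp.single (c, a) k)) = _
      rw [aux_prod_single, Finsupp.mapRange_single]; rfl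
  have hL0single : ∀ (p : ↥Q) (k : ℤ),
      L0 (AddMonoidAlgebra.single p k) =
        Finsupp.single (E.symm p).1 (AddMonoidAlgebra.single (E.symm p).2 k) := by
    intro p k
    show L2 (L1 (AddMonoidAlgebra.single p k)) = _
    have h1 : L1 (AddMonoidAlgebra.single p k) = Finsupp.single (E.symm p) k := by
      show Finsupp.equivMapDomain E.symm (Finsupp.single p k) = _
      rw [Finsupp.equivMapDomain_single]
    rw [h1, ← Prod.mk.eta (p := E.symm p), hL2single]
  have key : ∀ (s : AddMonoidAlgebra ℤ (Fin r → ℕ)) (m : AddMonoidAlgebra ℤ ↥Q),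
      L0 (s • m) = s • L0 m := by
    intro s m
    induction m using AddMonoidAlgebra.induction_linear with
    | zero => rw [smul_zero, map_zero, smul_zero]
    | add m m' ih ih' => rw [smul_add, map_add, map_add, smul_add, ih, ih']
    | single p k =>
      induction s using AddMonoidAlgebra.induction_linear with
      | zero => rw [zero_smul, map_zero, zero_smul]
      | add s s' ih ih' => rw [add_smul, map_add, ih, ih', add_smul]
      | single b j =>
        have hf : f (AddMonoidAlgebra.single b j) = AddMonoidAlgebra.single (ψ b) j := by
          show (AddMonoidAlgebra.mapDomainRingHom ℤ ψ) (AddMonoidAlgebra.single b j) = _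
          rw [AddMonoidAlgebra.mapDomainRingHom_apply]
          exact AddMonoidAlgebra.mapDomain_single
        have hsmulsingle : ∀ (s : AddMonoidAlgebra ℤ (Fin r → ℕ)) (c : T)
            (v : AddMonoidAlgebra ℤ (Fin r → ℕ)),
            s • (Finsupp.single c v : T →₀ AddMonoidAlgebra ℤ (Fin r → ℕ)) =
              Finsupp.single c (s * v) := by
          intro s c v
          rw [Finsupp.smul_single, smul_eq_mul]
        rw [hsmul (AddMonoidAlgebra.single b j) (AddMonoidAlgebra.single p k), hf,
          AddMonoidAlgebra.single_mul_single, hL0single, hL0single, hEsymm,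
          hsmulsingle, AddMonoidAlgebra.single_mul_single]
  let Lrepr : AddMonoidAlgebra ℤ ↥Q ≃ₗ[AddMonoidAlgebra ℤ (Fin r → ℕ)]
      (T →₀ AddMonoidAlgebra ℤ (Fin r → ℕ)) :=
    { L0 with map_smul' := key }
  let B : Module.Basis T (AddMonoidAlgebra ℤ (Fin r → ℕ)) (AddMonoidAlgebra ℤ ↥Q) :=
    Module.Basis.ofRepr Lrepr
  -- finiteness of the quotient
  have hQgpfg : AddGroup.FG ↥Qgp := by
    obtain ⟨S, hS⟩ := hQfg
    have hQgpS : Qgp = AddSubgroup.closure (S : Set G) := by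
      apply le_antisymm
      · rw [AddSubgroup.closure_le]
        intro x hx
        have hx' : x ∈ AddSubmonoid.closure (S : Set G) := by rw [hS]; exact hx
        exact (AddSubmonoid.closure_le.mpr AddSubgroup.subset_closure :
          AddSubmonoid.closure (S : Set G) ≤ (AddSubgroup.closure (S : Set G)).toAddSubmonoid) hx'
      · rw [AddSubgroup.closure_le]
        intro x hx
        exact AddSubgroup.subset_closure (hS ▸ AddSubmonoid.subset_closure hx)
    have hfg : Qgp.FG := (AddSubgroup.fg_iff _).mpr ⟨(S : Set G), hQgpS.symm, S.finite_toSet⟩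
    exact (AddGroup.fg_iff_addSubgroup_fg Qgp).mpr hfg
  haveI := hQgpfg
  haveI hfinT : Finite (↥Qgp ⧸ Pgp.addSubgroupOf Qgp) := by
    apply AddCommGroup.finite_of_fg_torsion
    intro x
    induction x using QuotientAddGroup.induction_on with
    | H g =>
      obtain ⟨n, hn, hmem⟩ := torsion_mod_Pgp hkum g.2
      rw [isOfFinAddOrder_iff_nsmul_eq_zero]
      refine ⟨n, hn, ?_⟩
      have h1 : (n • (QuotientAddGroup.mk g : ↥Qgp ⧸ Pgp.addSubgroupOf Qgp)) =
          QuotientAddGroup.mk (n • g) :=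
        (map_nsmul (QuotientAddGroup.mk' (Pgp.addSubgroupOf Qgp)) n g).symm
      rw [h1, QuotientAddGroup.eq_zero_iff, AddSubgroup.mem_addSubgroupOf]
      simpa using hmem
  refine ⟨Module.Free.of_basis B, AddSubgroup.index_ne_zero_of_finite, ?_⟩
  haveI : Fintype (↥Qgp ⧸ Pgp.addSubgroupOf Qgp) := Fintype.ofFinite _
  rw [rank_eq_card_basis B]
  have hidx : (Pgp.addSubgroupOf Qgp).index = Fintype.card T := by
    show Nat.card (↥Qgp ⧸ Pgp.addSubgroupOf Qgp) = _
    exact Nat.card_eq_fintype_card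
  rw [hidx]
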